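/- Let E be a real inner product space, N ≥ 1, D_1,…,D_N positive integers with D = Σ_i D_i, and vectors g_{im} ∈ E (i = 1,…,N, m = 1,…,D_i) with ‖g_{im}‖² ≤ G² for all i, m. Let C_1,…,C_N be {0,1}-valued random variables with P(C_i = 0) = e_i, and suppose that almost surely S = Σ_{i=1}^N D_i C_i > 0. Define A = (1/D)·Σ_{i=1}^N Σ_{m=1}^{D_i} g_{im} − (1/S)·Σ_{i=1}^N C_i Σ_{m=1}^{D_i} g_{im}. Then E[‖A‖²] ≤ (4/D)·(Σ_{i=1}^N D_i e_i)·G². -/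

import Mathlib

open Finset MeasureTheory

/-- Pointwise aggregation-error bound. -/
lemma key_norm_bound {E : Type*} [NormedAddCommGroup E] [NormedSpace ℝ E]
    {N : ℕ} (d : Fin N → ℝ) (h : Fin N → E) (c : Fin N → ℝ) (Gp : ℝ)
    (hGp : 0 ≤ Gp) (hd : ∀ i, 0 ≤ d i)
    (hh : ∀ i, ‖h i‖ ≤ d i * Gp) (hc : ∀ i, c i = 0 ∨ c i = 1)
    (D S : ℝ) (hD : D = ∑ i, d i) (hS : S = ∑ i, d i * c i) (hSpos : 0 < S) :
    ‖(1 / D) • (∑ i, h i) - (1 / S) • (∑ i, c i • h i)‖ ≤ 2 * ((D - S) / D) * Gp := by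
  have hc0 : ∀ i, 0 ≤ c i := fun i => by rcases hc i with h' | h' <;> rw [h'] <;> norm_num
  have hc1 : ∀ i, c i ≤ 1 := fun i => by rcases hc i with h' | h' <;> rw [h'] <;> norm_num
  have hSD : S ≤ D := by
    rw [hS, hD]
    exact Finset.sum_le_sum fun i _ => by
      nlinarith [hd i, hc1 i]
  have hD0 : 0 < D := lt_of_lt_of_le hSpos hSD
  have hsplit : (∑ i, (1 - c i) • h i) = (∑ i, h i) - ∑ i, c i • h i := by
    rw [← Finset.sum_sub_distrib]
    exact Finset.sum_congr rfl fun i _ => by rw [sub_smul, one_smul]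
  have h1 : ‖∑ i, (1 - c i) • h i‖ ≤ (D - S) * Gp := by
    calc ‖∑ i, (1 - c i) • h i‖ ≤ ∑ i, ‖(1 - c i) • h i‖ := norm_sum_le _ _
      _ ≤ ∑ i, (1 - c i) * (d i * Gp) := by
          apply Finset.sum_le_sum
          intro i _
          rw [norm_smul, Real.norm_eq_abs, abs_of_nonneg (by linarith [hc1 i])]
          exact mul_le_mul_of_nonneg_left (hh i) (by linarith [hc1 i])
      _ = (D - S) * Gp := by
          rw [hD, hS]
          rw [← Finset.sum_sub_distrib, Finset.sum_mul]
          exact Finset.sum_congr rfl fun i _ => by ring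
  have h2 : ‖∑ i, c i • h i‖ ≤ S * Gp := by
    calc ‖∑ i, c i • h i‖ ≤ ∑ i, ‖c i • h i‖ := norm_sum_le _ _
      _ ≤ ∑ i, c i * (d i * Gp) := by
          apply Finset.sum_le_sum
          intro i _
          rw [norm_smul, Real.norm_eq_abs, abs_of_nonneg (hc0 i)]
          exact mul_le_mul_of_nonneg_left (hh i) (hc0 i)
      _ = S * Gp := by
          rw [hS, Finset.sum_mul]
          exact Finset.sum_congr rfl fun i _ => by ring
  have hre : (1 / D) • (∑ i, h i) - (1 / S) • (∑ i, c i • h i)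
      = (1 / D) • (∑ i, (1 - c i) • h i) + ((1 / D) - (1 / S)) • (∑ i, c i • h i) := by
    rw [hsplit]
    module
  rw [hre]
  have hinv : (1 : ℝ) / D ≤ 1 / S := one_div_le_one_div_of_le hSpos hSD
  calc ‖(1 / D) • (∑ i, (1 - c i) • h i) + ((1 / D) - (1 / S)) • (∑ i, c i • h i)‖
      ≤ ‖(1 / D) • (∑ i, (1 - c i) • h i)‖ + ‖((1 / D) - (1 / S)) • (∑ i, c i • h i)‖ :=
        norm_add_le _ _
    _ = (1 / D) * ‖∑ i, (1 - c i) • h i‖ + ((1 / S) - (1 / D)) * ‖∑ i, c i • h i‖ := by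
        rw [norm_smul, norm_smul, Real.norm_eq_abs, Real.norm_eq_abs,
          abs_of_nonneg (by positivity), abs_of_nonpos (by linarith)]
        ring
    _ ≤ (1 / D) * ((D - S) * Gp) + ((1 / S) - (1 / D)) * (S * Gp) := by
        gcongr
    _ = 2 * ((D - S) / D) * Gp := by
        field_simp
        ring

theorem stmt_5 {E : Type*} [NormedAddCommGroup E] [InnerProductSpace ℝ E]
    {Ω : Type*} [MeasurableSpace Ω] (μ : Measure Ω) [IsProbabilityMeasure μ]
    (N : ℕ) (hN : 1 ≤ N) (Dn : Fin N → ℕ) (hDn : ∀ i, 0 < Dn i)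
    (g : (i : Fin N) → Fin (Dn i) → E) (G : ℝ)
    (hG : ∀ (i : Fin N) (m : Fin (Dn i)), ‖g i m‖ ^ 2 ≤ G ^ 2)
    (C : Fin N → Ω → ℝ) (hCmeas : ∀ i, Measurable (C i))
    (hC01 : ∀ i ω, C i ω = 0 ∨ C i ω = 1)
    (e : Fin N → ℝ) (he0 : ∀ i, 0 ≤ e i)
    (hPe : ∀ i, μ {ω | C i ω = 0} = ENNReal.ofReal (e i))
    (D : ℝ) (hD : D = ∑ i, (Dn i : ℝ))
    (hSpos : ∀ᵐ ω ∂μ, 0 < ∑ i, (Dn i : ℝ) * C i ω) :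
    ∫ ω, ‖(1 / D) • (∑ i, ∑ m, g i m) -
        (1 / (∑ i, (Dn i : ℝ) * C i ω)) • (∑ i, C i ω • ∑ m, g i m)‖ ^ 2 ∂μ ≤
      (4 / D) * (∑ i, (Dn i : ℝ) * e i) * G ^ 2 := by
  have hD0 : 0 < D := by
    rw [hD]
    have : Nonempty (Fin N) := Fin.pos_iff_nonempty.mp hN
    apply Finset.sum_pos (fun i _ => by exact_mod_cast hDn i) Finset.univ_nonempty
  set Gp := |G| with hGpdef
  have hGp : 0 ≤ Gp := abs_nonneg G
  have hGpsq : Gp ^ 2 = G ^ 2 := sq_abs G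
  have hgnorm : ∀ (i : Fin N) (m : Fin (Dn i)), ‖g i m‖ ≤ Gp := by
    intro i m
    have := Real.sqrt_le_sqrt (hG i m)
    rwa [Real.sqrt_sq (norm_nonneg _), Real.sqrt_sq_eq_abs] at this
  have hh : ∀ i, ‖∑ m, g i m‖ ≤ (Dn i : ℝ) * Gp := by
    intro i
    calc ‖∑ m, g i m‖ ≤ ∑ m, ‖g i m‖ := norm_sum_le _ _
      _ ≤ ∑ _m : Fin (Dn i), Gp := Finset.sum_le_sum fun m _ => hgnorm i m
      _ = (Dn i : ℝ) * Gp := by simp [Finset.sum_const, Finset.card_univ]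
  -- pointwise (a.e.) bound
  have hptwise : ∀ᵐ ω ∂μ,
      ‖(1 / D) • (∑ i, ∑ m, g i m) -
        (1 / (∑ i, (Dn i : ℝ) * C i ω)) • (∑ i, C i ω • ∑ m, g i m)‖ ^ 2
      ≤ (4 * G ^ 2 / D) * (D - ∑ i, (Dn i : ℝ) * C i ω) := by
    filter_upwards [hSpos] with ω hS
    set S := ∑ i, (Dn i : ℝ) * C i ω with hSdef
    have hbound := key_norm_bound (fun i => (Dn i : ℝ)) (fun i => ∑ m, g i m)
      (fun i => C i ω) Gp hGp (fun i => by positivity) hh (fun i => hC01 i ω)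
      D S hD hSdef hS
    have hSD : S ≤ D := by
      rw [hSdef, hD]
      apply Finset.sum_le_sum
      intro i _
      have hc1 : C i ω ≤ 1 := by rcases hC01 i ω with h' | h' <;> rw [h'] <;> norm_num
      have : (0:ℝ) ≤ (Dn i : ℝ) := by positivity
      nlinarith
    have hA0 : (0:ℝ) ≤ ‖(1 / D) • (∑ i, ∑ m, g i m) - (1 / S) • (∑ i, C i ω • ∑ m, g i m)‖ :=
      norm_nonneg _
    have hsq : ‖(1 / D) • (∑ i, ∑ m, g i m) - (1 / S) • (∑ i, C i ω • ∑ m, g i m)‖ ^ 2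
        ≤ (2 * ((D - S) / D) * Gp) ^ 2 := by
      apply pow_le_pow_left₀ hA0 hbound
    have hfrac0 : 0 ≤ (D - S) / D := div_nonneg (by linarith) hD0.le
    have hfrac1 : (D - S) / D ≤ 1 := by
      rw [div_le_one hD0]; linarith
    calc ‖(1 / D) • (∑ i, ∑ m, g i m) - (1 / S) • (∑ i, C i ω • ∑ m, g i m)‖ ^ 2
        ≤ (2 * ((D - S) / D) * Gp) ^ 2 := hsq
      _ = 4 * ((D - S) / D) ^ 2 * Gp ^ 2 := by ring
      _ ≤ 4 * ((D - S) / D) * Gp ^ 2 := by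
          have hx2 : ((D - S) / D) ^ 2 ≤ (D - S) / D := by nlinarith
          nlinarith [mul_nonneg (by nlinarith : (0:ℝ) ≤ (D - S) / D - ((D - S) / D) ^ 2)
            (sq_nonneg Gp)]
      _ = (4 * G ^ 2 / D) * (D - S) := by rw [hGpsq]; field_simp
  -- integrability of the RHS
  have hCint : ∀ i, Integrable (C i) μ := by
    intro i
    apply Integrable.mono' (integrable_const (1:ℝ)) (hCmeas i).aestronglyMeasurable
    filter_upwards with ω
    rcases hC01 i ω with h' | h' <;> rw [h'] <;> simp
  have hSint : Integrable (fun ω => ∑ i, (Dn i : ℝ) * C i ω) μ :=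
    integrable_finset_sum _ fun i _ => (hCint i).const_mul _
  have hRHSint : Integrable (fun ω => (4 * G ^ 2 / D) * (D - ∑ i, (Dn i : ℝ) * C i ω)) μ :=
    ((integrable_const D).sub hSint).const_mul _
  -- apply monotonicity
  have hmain := integral_mono_of_nonneg
    (f := fun ω => ‖(1 / D) • (∑ i, ∑ m, g i m) -
        (1 / (∑ i, (Dn i : ℝ) * C i ω)) • (∑ i, C i ω • ∑ m, g i m)‖ ^ 2)
    (Filter.Eventually.of_forall fun ω => sq_nonneg _) hRHSint hptwise
  -- compute the RHS integral
  have hCi_int : ∀ i, ∫ ω, (1 - C i ω) ∂μ = e i := by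
    intro i
    have hset : MeasurableSet {ω | C i ω = 0} := hCmeas i (measurableSet_singleton 0)
    have heq : (fun ω => 1 - C i ω) = Set.indicator {ω | C i ω = 0} (1 : Ω → ℝ) := by
      funext ω
      rcases hC01 i ω with h' | h'
      · rw [h', Set.indicator_of_mem (by simpa [Set.mem_setOf_eq] using h')]
        simp
      · rw [h', Set.indicator_of_notMem (by simp [Set.mem_setOf_eq, h'])]
        norm_num
    rw [heq, integral_indicator_one hset, measureReal_def, hPe i, ENNReal.toReal_ofReal (he0 i)]
  have hIntval : ∫ ω, (4 * G ^ 2 / D) * (D - ∑ i, (Dn i : ℝ) * C i ω) ∂μ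
      = (4 / D) * (∑ i, (Dn i : ℝ) * e i) * G ^ 2 := by
    rw [integral_const_mul]
    have hdiff : (fun ω => D - ∑ i, (Dn i : ℝ) * C i ω)
        = fun ω => ∑ i, (Dn i : ℝ) * (1 - C i ω) := by
      funext ω
      rw [hD, ← Finset.sum_sub_distrib]
      exact Finset.sum_congr rfl fun i _ => by ring
    rw [hdiff, integral_finset_sum]
    · have : ∀ i ∈ Finset.univ, ∫ ω, (Dn i : ℝ) * (1 - C i ω) ∂μ = (Dn i : ℝ) * e i := by
        intro i _
        rw [integral_const_mul, hCi_int i]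
      rw [Finset.sum_congr rfl this]
      ring
    · intro i _
      exact ((integrable_const (1:ℝ)).sub (hCint i)).const_mul _
  rw [hIntval] at hmain
  exact hmain
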